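/- Let n ≥ 3 and let f_{k,ℓ} denote the (k,ℓ)-entry of (M')^{-1} N M', where M' is the generic antidiagonal-unipotent matrix and N the regular nilpotent Jordan matrix. Then for all 1 ≤ ℓ < k ≤ n with k > ℓ+1, the recursion f_{k,ℓ} = x_{n+2−k,ℓ} − Σ_{p=ℓ+1}^{k−1} x_{n+1−k,p} · f_{p,ℓ} holds. -/

import Mathlib

open MvPolynomial

/-- The generic antidiagonal-unipotent `n × n` matrix `M'` (the matrix `w₀M`):
indeterminates `x_{i,j}` above the antidiagonal, `1`'s on the antidiagonal,
`0`'s below. -/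
noncomputable def genM (K : Type*) [Field K] (n : ℕ) :
    Matrix (Fin n) (Fin n) (MvPolynomial (Fin n × Fin n) K) := fun i j =>
  if (i : ℕ) + (j : ℕ) < n - 1 then MvPolynomial.X (i, j)
  else if (i : ℕ) + (j : ℕ) = n - 1 then 1 else 0

/-- The regular nilpotent Jordan matrix `N`, with `1`'s on the superdiagonal. -/
noncomputable def nilpMat (K : Type*) [Field K] (n : ℕ) :
    Matrix (Fin n) (Fin n) (MvPolynomial (Fin n × Fin n) K) := fun i j =>
  if (j : ℕ) = (i : ℕ) + 1 then 1 else 0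

/-- The matrix `(M')⁻¹ N M'`, whose `(k,ℓ)` entry is the polynomial `f_{k,ℓ}`. -/
noncomputable def hessMat (K : Type*) [Field K] (n : ℕ) :
    Matrix (Fin n) (Fin n) (MvPolynomial (Fin n × Fin n) K) :=
  (genM K n)⁻¹ * nilpMat K n * genM K n

section Aux

variable {K : Type*} [Field K] {n : ℕ}

lemma genM_det_isUnit : IsUnit (genM K n).det := by
  have h1 : genM K n = Matrix.submatrix (fun i j => genM K n (Fin.rev i) j) Fin.revPerm id := by
    ext i j
    simp [Matrix.submatrix, Fin.revPerm]
  rw [h1]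
  erw [Matrix.det_permute]
  have h2 : Matrix.det (fun i j => genM K n (Fin.rev i) j) = 1 := by
    erw [Matrix.det_of_lowerTriangular]
    · apply Finset.prod_eq_one
      intro i _
      have := i.isLt
      simp only [genM, Fin.val_rev]
      rw [if_neg (by omega), if_pos (by omega)]
    · intro i j hij
      have hij' : (i : ℕ) < (j : ℕ) := hij
      have := j.isLt
      simp only [genM, Fin.val_rev]
      rw [if_neg (by omega), if_neg (by omega)]
  rw [h2, mul_one]
  exact (Equiv.Perm.sign _).isUnit.map (Int.castRingHom _)

lemma genM_mul_hess : genM K n * hessMat K n = nilpMat K n * genM K n := by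
  rw [hessMat, ← Matrix.mul_assoc, ← Matrix.mul_assoc,
    Matrix.mul_nonsing_inv _ genM_det_isUnit, Matrix.one_mul]

lemma key (k q : Fin n) :
    hessMat K n k q =
      (nilpMat K n * genM K n) k.rev q -
        ∑ j : Fin n, (if (j : ℕ) < (k : ℕ) then
          MvPolynomial.X (k.rev, j) * hessMat K n j q else 0) := by
  have h := congrFun (congrFun (genM_mul_hess (K := K) (n := n)) k.rev) q
  rw [Matrix.mul_apply] at h
  have expand : ∀ j : Fin n, genM K n k.rev j * hessMat K n j q =
      (if j = k then hessMat K n k q else 0) +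
      (if (j : ℕ) < (k : ℕ) then MvPolynomial.X (k.rev, j) * hessMat K n j q else 0) := by
    intro j
    have hk := k.isLt
    have hj := j.isLt
    rcases lt_trichotomy (j : ℕ) (k : ℕ) with h1 | h1 | h1
    · have hne : ¬ j = k := by
        intro he; rw [he] at h1; omega
      simp only [genM, Fin.val_rev]
      rw [if_pos (by omega), if_neg hne, if_pos h1, zero_add]
    · have he : j = k := Fin.ext h1
      simp only [genM, Fin.val_rev]
      rw [if_neg (by omega), if_pos (by omega), if_pos he, if_neg (by omega), he, one_mul,
        add_zero]
    · have hne : ¬ j = k := by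
        intro he; rw [he] at h1; omega
      simp only [genM, Fin.val_rev]
      rw [if_neg (by omega), if_neg (by omega), if_neg hne, if_neg (by omega), zero_mul,
        add_zero]
  rw [Finset.sum_congr rfl (fun j _ => expand j), Finset.sum_add_distrib,
    Finset.sum_ite_eq' Finset.univ k (fun _ => hessMat K n k q),
    if_pos (Finset.mem_univ k)] at h
  linear_combination h

lemma tri : ∀ m : ℕ, ∀ k q : Fin n, (k : ℕ) = m → (k : ℕ) ≤ (q : ℕ) → hessMat K n k q = 0 := by
  intro m
  induction m using Nat.strong_induction_on with
  | _ m ih =>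
    intro k q hk hq
    rw [key]
    have h1 : (nilpMat K n * genM K n) k.rev q = 0 := by
      rw [Matrix.mul_apply]
      apply Finset.sum_eq_zero
      intro j _
      have hk' := k.isLt
      have hj := j.isLt
      have hq' := q.isLt
      simp only [nilpMat, Fin.val_rev]
      by_cases hc : (j : ℕ) = n - 1 - (k : ℕ) + 1
      · rw [if_pos (by omega), one_mul]
        simp only [genM]
        rw [if_neg (by omega), if_neg (by omega)]
      · rw [if_neg (by omega), zero_mul]
    rw [h1, zero_sub, neg_eq_zero]
    apply Finset.sum_eq_zero
    intro j _
    split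
    · next hj =>
      rw [ih (j : ℕ) (by omega) j q rfl (by omega), mul_zero]
    · rfl

end Aux

/-- For 1-indexed `k, ℓ` with `1 ≤ ℓ`, `ℓ + 1 < k ≤ n`, the recursion
`f_{k,ℓ} = x_{n+2-k,ℓ} - ∑_{p=ℓ+1}^{k-1} x_{n+1-k,p} · f_{p,ℓ}` holds.  In 0-indexed
terms: `f_{k,ℓ}` is the entry of `(M')⁻¹ N M'` at `(k-1, ℓ-1)`, the variable
`x_{a,b}` (1-indexed) is `X (a-1, b-1)`, and the sum runs over `p` (0-indexed
`p.val = p - 1`) with `ℓ ≤ p.val` and `p.val + 1 < k`. -/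


theorem stmt6 {K : Type*} [Field K] {n : ℕ} (hn : 3 ≤ n)
    (k l : ℕ) (hl1 : 1 ≤ l) (hlk : l + 1 < k) (hkn : k ≤ n) :
    hessMat K n ⟨k - 1, by omega⟩ ⟨l - 1, by omega⟩ =
      MvPolynomial.X ((⟨n + 1 - k, by omega⟩ : Fin n), (⟨l - 1, by omega⟩ : Fin n)) -
      ∑ p : Fin n, if l ≤ (p : ℕ) ∧ (p : ℕ) + 1 < k then
        MvPolynomial.X ((⟨n - k, by omega⟩ : Fin n), (⟨(p : ℕ), p.isLt⟩ : Fin n)) *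
          hessMat K n p ⟨l - 1, by omega⟩
      else 0 := by
  rw [key]
  have hrev : (Fin.rev (⟨k - 1, by omega⟩ : Fin n)) = (⟨n - k, by omega⟩ : Fin n) := by
    apply Fin.ext
    simp only [Fin.val_rev, Fin.val_mk]
    omega
  congr 1
  · -- first term
    rw [Matrix.mul_apply]
    rw [Finset.sum_eq_single (⟨n + 1 - k, by omega⟩ : Fin n)]
    · simp only [nilpMat, genM, Fin.val_rev, Fin.val_mk]
      rw [if_pos (by omega), one_mul, if_pos (by omega)]
    · intro j _ hj
      have hjv : (j : ℕ) ≠ n + 1 - k := fun hc => hj (Fin.ext hc)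
      simp only [nilpMat, Fin.val_rev, Fin.val_mk]
      rw [if_neg (by omega), zero_mul]
    · intro habs
      exact absurd (Finset.mem_univ _) habs
  · -- sums agree
    apply Finset.sum_congr rfl
    intro j _
    by_cases h1 : l ≤ (j : ℕ)
    · by_cases h2 : (j : ℕ) + 1 < k
      · rw [if_pos (show ((j : Fin n) : ℕ) < ((⟨k - 1, by omega⟩ : Fin n) : ℕ) by
            simp only [Fin.val_mk]; omega),
          if_pos ⟨h1, h2⟩, hrev]
      · rw [if_neg (show ¬ ((j : Fin n) : ℕ) < ((⟨k - 1, by omega⟩ : Fin n) : ℕ) by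
            simp only [Fin.val_mk]; omega),
          if_neg (by tauto)]
    · have hr : (if l ≤ (j : ℕ) ∧ (j : ℕ) + 1 < k then
          MvPolynomial.X ((⟨n - k, by omega⟩ : Fin n), (⟨(j : ℕ), j.isLt⟩ : Fin n)) *
            hessMat K n j ⟨l - 1, by omega⟩ else 0) = 0 := by
        rw [if_neg]; exact fun h => h1 h.1
      rw [hr]
      by_cases h2 : ((j : Fin n) : ℕ) < ((⟨k - 1, by omega⟩ : Fin n) : ℕ)
      · rw [if_pos h2,
          tri (j : ℕ) j ⟨l - 1, by omega⟩ rfl (show (j : ℕ) ≤ l - 1 by omega), mul_zero]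
      · rw [if_neg h2]
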